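/- Let G be a finitely generated abelian group and R a commutative ring with a chosen class δ ∈ Ext¹(G, R^×). Then there exist units u₁,…,u_l ∈ R^× and integers a₁,…,a_l ≥ 2 with a₁⋯a_l equal to the order of the torsion subgroup of G, such that for any ring homomorphism f : R → S, if each f(uᵢ) has an aᵢ-th root vᵢ ∈ S, then the image of δ under the induced map Ext¹(G, R^×) → Ext¹(G, S^×) is zero. -/

import Mathlib

/-- Let `G` be a finitely generated abelian group, `R` a commutative ring, and
`δ ∈ Ext¹(G, R^×)` a class, represented by an extension
`0 → R^× → E → G → 0` (given by an injection `i` and a surjection `π` with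
`im i = ker π`).  Then there exist units `u₁,…,u_l ∈ R^×` and integers
`a₁,…,a_l ≥ 2` with `a₁⋯a_l` the order of the torsion subgroup of `G`, such that
for any ring homomorphism `f : R → S`, if each `f(uⱼ)` has an `aⱼ`-th root in
`S^×`, then the image of `δ` in `Ext¹(G, S^×)` vanishes — i.e. the map
`R^× → S^×` extends to a homomorphism `E → S^×`, so the pushed-out extension
splits. -/
theorem ext_class_killed_by_roots
    (G : Type*) [AddCommGroup G] [AddGroup.FG G]
    (R : Type*) [CommRing R]
    (E : Type*) [AddCommGroup E]
    (i : Additive Rˣ →+ E) (π : E →+ G)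
    (hi : Function.Injective i) (hπ : Function.Surjective π)
    (hexact : i.range = π.ker) :
    ∃ (l : ℕ) (u : Fin l → Rˣ) (a : Fin l → ℕ),
      (∀ j, 2 ≤ a j) ∧
      ((∏ j, a j) = Nat.card (AddCommGroup.torsion G)) ∧
      (∀ (S : Type*) [CommRing S] (f : R →+* S),
        (∀ j, ∃ v : Sˣ, v ^ (a j) = Units.map f.toMonoidHom (u j)) →
        ∃ ρ : E →+ Additive Sˣ,
          ρ.comp i = (MonoidHom.toAdditive (Units.map f.toMonoidHom))) := by
  classical
  obtain ⟨n, ι, fι, p, hp, ex, ⟨φ⟩⟩ := AddCommGroup.equiv_free_prod_directSum_zmod G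
  set q : ι → ℕ := fun i0 => p i0 ^ ex i0 with hqdef
  have hqpos : ∀ i0, 0 < q i0 := fun i0 => pow_pos (hp i0).pos _
  haveI : ∀ i0, NeZero (q i0) := fun i0 => ⟨(hqpos i0).ne'⟩
  -- torsion generators and free generators of G
  set gt : ι → G := fun i0 =>
    φ.symm (0, DirectSum.of (fun i1 => ZMod (q i1)) i0 1) with hgt
  choose εt hεt using fun i0 => hπ (gt i0)
  choose εf hεf using fun k : Fin n => hπ (φ.symm (Finsupp.single k 1, 0))
  -- q i0 • gt i0 = 0
  have hgtq : ∀ i0, q i0 • gt i0 = 0 := by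
    intro i0
    have h1 : q i0 • (1 : ZMod (q i0)) = 0 := by
      simp [nsmul_eq_mul]
    calc q i0 • gt i0
        = φ.symm (q i0 • ((0 : Fin n →₀ ℤ),
            DirectSum.of (fun i1 => ZMod (q i1)) i0 1)) := (map_nsmul _ _ _).symm
      _ = 0 := by
          rw [Prod.smul_mk, smul_zero, ← map_nsmul, h1, map_zero]
          exact map_zero φ.symm
  -- the units U i0 with i (U i0) = q i0 • εt i0
  have hU : ∀ i0, q i0 • εt i0 ∈ i.range := by
    intro i0
    rw [hexact, AddMonoidHom.mem_ker, map_nsmul, hεt, hgtq]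
  choose U hUeq using hU
  -- coordinates
  set X : G → (Fin n →₀ ℤ) := fun g => (φ g).1 with hX
  set Y : G → ∀ i0, ZMod (q i0) := fun g i0 => (φ g).2 i0 with hY
  -- the set-theoretic section
  set σ : G → E := fun g =>
    (∑ k, X g k • εf k) + ∑ i0, (Y g i0).val • εt i0 with hσdef
  have hπσ : ∀ g, π (σ g) = g := by
    intro g
    have hval : ∀ i0, (Y g i0).val • (1 : ZMod (q i0)) = Y g i0 := by
      intro i0
      rw [nsmul_eq_mul, mul_one, ZMod.natCast_val, ZMod.cast_id]
    have key : π (σ g) = φ.symm ((X g, 0) + (0, (φ g).2)) := by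
      rw [hσdef]
      simp only [map_add, map_sum]
      congr 1
      · calc (∑ k, π (X g k • εf k))
            = ∑ k, φ.symm (X g k • ((Finsupp.single k 1 : Fin n →₀ ℤ),
                (0 : DirectSum ι fun i1 => ZMod (q i1)))) := by
              refine Finset.sum_congr rfl fun k _ => ?_
              rw [map_zsmul, hεf, ← map_zsmul]
          _ = φ.symm (∑ k, X g k • ((Finsupp.single k 1 : Fin n →₀ ℤ),
                (0 : DirectSum ι fun i1 => ZMod (q i1)))) := by
              rw [map_sum]
          _ = φ.symm ((X g, 0)) := by
              congr 1
              rw [Prod.ext_iff]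
              constructor
              · simp only [Prod.fst_sum, Prod.smul_mk]
                simp [Finsupp.smul_single, Finsupp.univ_sum_single]
              · simp [Prod.snd_sum]
      · calc (∑ i0, π ((Y g i0).val • εt i0))
            = ∑ i0, φ.symm ((Y g i0).val • ((0 : Fin n →₀ ℤ),
                DirectSum.of (fun i1 => ZMod (q i1)) i0 1)) := by
              refine Finset.sum_congr rfl fun i0 _ => ?_
              rw [map_nsmul, hεt, ← map_nsmul]
          _ = φ.symm (∑ i0, (Y g i0).val • ((0 : Fin n →₀ ℤ),
                DirectSum.of (fun i1 => ZMod (q i1)) i0 1)) := by rw [map_sum]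
          _ = φ.symm ((0, (φ g).2)) := by
              congr 1
              rw [Prod.ext_iff]
              constructor
              · simp [Prod.fst_sum]
              · simp only [Prod.snd_sum, Prod.smul_mk]
                rw [show (∑ i0, (Y g i0).val • DirectSum.of (fun i1 => ZMod (q i1)) i0 1)
                    = ∑ i0, DirectSum.of (fun i1 => ZMod (q i1)) i0 (Y g i0) from
                  Finset.sum_congr rfl fun i0 _ => by rw [← map_nsmul, hval]]
                exact DirectSum.sum_univ_of _
    rw [key, Prod.mk_add_mk, add_zero, zero_add, hX]
    exact φ.symm_apply_apply g
  have hσ0 : σ 0 = 0 := by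
    have h0 : φ (0 : G) = 0 := map_zero φ
    simp [hσdef, hX, hY, h0]
  -- carries
  set c : G → G → ι → ℕ := fun g h i0 => ((Y g i0).val + (Y h i0).val) / q i0 with hc
  have hcarry : ∀ g h i0,
      (Y g i0).val + (Y h i0).val = (Y (g + h) i0).val + c g h i0 * q i0 := by
    intro g h i0
    have hYadd : Y (g + h) i0 = Y g i0 + Y h i0 := by
      simp [hY, map_add]
    rw [hYadd, ZMod.val_add, hc, Nat.mod_add_div']
  -- the cocycle identity
  have hσadd : ∀ g h, σ g + σ h = σ (g + h) + i (∑ i0, c g h i0 • U i0) := by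
    intro g h
    have hXadd : ∀ k, X (g + h) k = X g k + X h k := by
      intro k; simp [hX, map_add]
    have hfree : (∑ k, X (g+h) k • εf k) = (∑ k, X g k • εf k) + ∑ k, X h k • εf k := by
      rw [← Finset.sum_add_distrib]
      exact Finset.sum_congr rfl fun k _ => by rw [hXadd, add_smul]
    have htorsum : (∑ i0, (Y g i0).val • εt i0) + (∑ i0, (Y h i0).val • εt i0)
        = (∑ i0, (Y (g+h) i0).val • εt i0) + ∑ i0, c g h i0 • i (U i0) := by
      rw [← Finset.sum_add_distrib, ← Finset.sum_add_distrib]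
      refine Finset.sum_congr rfl fun i0 _ => ?_
      rw [← add_nsmul, hcarry g h i0, add_nsmul, hUeq, smul_smul]
    have hiC : i (∑ i0, c g h i0 • U i0) = ∑ i0, c g h i0 • i (U i0) := by
      rw [map_sum]; exact Finset.sum_congr rfl fun i0 _ => map_nsmul _ _ _
    have key : ((∑ k, X g k • εf k) + ∑ i0, (Y g i0).val • εt i0)
        + ((∑ k, X h k • εf k) + ∑ i0, (Y h i0).val • εt i0)
        = ((∑ k, X (g+h) k • εf k) + ∑ i0, (Y (g+h) i0).val • εt i0)
          + ∑ i0, c g h i0 • i (U i0) := by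
      calc ((∑ k, X g k • εf k) + ∑ i0, (Y g i0).val • εt i0)
          + ((∑ k, X h k • εf k) + ∑ i0, (Y h i0).val • εt i0)
          = ((∑ k, X g k • εf k) + ∑ k, X h k • εf k)
            + ((∑ i0, (Y g i0).val • εt i0) + ∑ i0, (Y h i0).val • εt i0) := by abel
        _ = (∑ k, X (g+h) k • εf k)
            + ((∑ i0, (Y (g+h) i0).val • εt i0) + ∑ i0, c g h i0 • i (U i0)) := by
            rw [← hfree, htorsum]
        _ = ((∑ k, X (g+h) k • εf k) + ∑ i0, (Y (g+h) i0).val • εt i0)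
            + ∑ i0, c g h i0 • i (U i0) := by abel
    rw [hσdef, hiC]
    exact key
  -- the retraction-coordinate r
  have hrex : ∀ e, e - σ (π e) ∈ i.range := by
    intro e
    rw [hexact, AddMonoidHom.mem_ker, map_sub, hπσ, sub_self]
  choose r hri using hrex
  have hradd : ∀ e e', r (e + e') = r e + r e' + ∑ i0, c (π e) (π e') i0 • U i0 := by
    intro e e'
    apply hi
    have hCσ : i (∑ i0, c (π e) (π e') i0 • U i0)
        = σ (π e) + σ (π e') - σ (π e + π e') := by
      rw [hσadd (π e) (π e')]; abel
    have h1 : i (r (e + e')) = e + e' - σ (π e + π e') := by rw [hri, map_add π]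
    have h2 : i (r e + r e' + ∑ i0, c (π e) (π e') i0 • U i0)
        = (e - σ (π e)) + (e' - σ (π e'))
          + (σ (π e) + σ (π e') - σ (π e + π e')) := by
      rw [map_add i (r e + r e') _, map_add i (r e) (r e'), hri, hri, hCσ]
    rw [h1, h2]; abel
  have hru : ∀ u0 : Additive Rˣ, r (i u0) = u0 := by
    intro u0
    apply hi
    rw [hri]
    have hπi : π (i u0) = 0 := by
      have : i u0 ∈ π.ker := by rw [← hexact]; exact ⟨u0, rfl⟩
      exact this
    rw [hπi, hσ0, sub_zero]
  -- the index set of nontrivial factors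
  set ι' := {i0 : ι // 2 ≤ q i0} with hι'
  set l := Fintype.card ι' with hl
  set b : Fin l ≃ ι' := (Fintype.equivFin ι').symm with hb
  refine ⟨l, fun j => Additive.toMul (U (b j)), fun j => q (b j), fun j => (b j).2, ?_, ?_⟩
  · -- the product of the orders is the cardinality of the torsion subgroup
    have hqsum : ∏ j : Fin l, q (b j) = ∏ i0 : ι, q i0 := by
      rw [Fintype.prod_equiv b (fun j => q (b j)) (fun x : ι' => q x) (fun j => rfl)]
      rw [← Finset.prod_filter_of_ne (p := fun i0 => 2 ≤ q i0)
        (fun i0 _ hne => by have h1 := hqpos i0; omega)]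
      exact (Finset.prod_subtype (Finset.univ.filter fun i0 => 2 ≤ q i0)
        (fun i0 => by simp [hι']) q).symm
    -- identify the torsion subgroup
    set J : (DirectSum ι fun i1 => ZMod (q i1)) →+ G :=
      φ.symm.toAddMonoidHom.comp (AddMonoidHom.inr (Fin n →₀ ℤ) _) with hJ
    have hJinj : Function.Injective J := by
      intro x y hxy
      have := φ.symm.injective hxy
      exact congrArg Prod.snd this
    haveI : Finite (DirectSum ι fun i1 => ZMod (q i1)) :=
      Finite.of_equiv _ (DFinsupp.equivFunOnFintype).symm
    have hrange : AddCommGroup.torsion G = J.range := by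
      ext g
      constructor
      · intro hg
        obtain ⟨m, hm, hmg⟩ := isOfFinAddOrder_iff_nsmul_eq_zero.mp hg
        have hXg : (φ g).1 = 0 := by
          have h1 : m • (φ g).1 = 0 := by
            have : φ (m • g) = 0 := by rw [hmg, map_zero]
            rw [map_nsmul] at this
            exact congrArg Prod.fst this
          ext k
          have h2 : m • (φ g).1 k = 0 := by rw [← Finsupp.smul_apply, h1]; rfl
          have h3 : (m : ℤ) * (φ g).1 k = 0 := by
            rw [← nsmul_eq_mul]
            exact_mod_cast h2
          rcases mul_eq_zero.mp h3 with h | h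
          · exact absurd (by exact_mod_cast h) hm.ne'
          · simpa using h
        refine ⟨(φ g).2, ?_⟩
        show φ.symm (0, (φ g).2) = g
        rw [← hXg]
        exact φ.symm_apply_apply g
      · rintro ⟨x, rfl⟩
        exact (AddMonoidHom.isOfFinAddOrder J (isOfFinAddOrder_of_finite x))
    have hcard : Nat.card (AddCommGroup.torsion G) = ∏ i0 : ι, q i0 := by
      rw [hrange]
      have h1 : Nat.card J.range = Nat.card (DirectSum ι fun i1 => ZMod (q i1)) :=
        Nat.card_congr (Equiv.ofInjective _ hJinj).symm
      have h2 : Nat.card (DirectSum ι fun i1 => ZMod (q i1))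
          = Nat.card (∀ i0, ZMod (q i0)) :=
        Nat.card_congr (DFinsupp.equivFunOnFintype)
      rw [h1, h2, Nat.card_pi]
      exact Finset.prod_congr rfl fun i0 _ => Nat.card_zmod _
    rw [hcard]
    exact hqsum
  · -- the splitting after adjoining roots
    intro S _ f hroots
    set φS : Additive Rˣ →+ Additive Sˣ :=
      MonoidHom.toAdditive (Units.map f.toMonoidHom) with hφS
    have hv : ∀ i0 : ι, ∃ w : Additive Sˣ, q i0 • w = φS (U i0) := by
      intro i0
      by_cases h2 : 2 ≤ q i0
      · obtain ⟨v, hv⟩ := hroots (b.symm ⟨i0, h2⟩)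
        refine ⟨Additive.ofMul v, ?_⟩
        have hbb : (b (b.symm ⟨i0, h2⟩) : ι) = i0 := by rw [b.apply_symm_apply]
        have : v ^ q i0 = Units.map f.toMonoidHom (Additive.toMul (U i0)) := by
          rw [← hbb]
          exact hv
        show Additive.ofMul (v ^ q i0) = _
        rw [this]
        rfl
      · have hq1 : q i0 = 1 := by have h1 := hqpos i0; omega
        exact ⟨φS (U i0), by rw [hq1, one_smul]⟩
    choose v' hv'eq using hv
    set τ : G → Additive Sˣ := fun g => ∑ i0, (Y g i0).val • v' i0 with hτdef
    have hτ0 : τ 0 = 0 := by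
      have h0 : φ (0 : G) = 0 := map_zero φ
      simp [hτdef, hY, h0]
    have hτadd : ∀ g h, τ g + τ h = τ (g + h) + φS (∑ i0, c g h i0 • U i0) := by
      intro g h
      have hφSC : φS (∑ i0, c g h i0 • U i0) = ∑ i0, c g h i0 • φS (U i0) := by
        rw [map_sum]; exact Finset.sum_congr rfl fun i0 _ => map_nsmul _ _ _
      rw [hτdef, hφSC]
      rw [← Finset.sum_add_distrib, ← Finset.sum_add_distrib]
      refine Finset.sum_congr rfl fun i0 _ => ?_
      rw [← add_nsmul, hcarry g h i0, add_nsmul, ← hv'eq, smul_smul]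
    refine ⟨AddMonoidHom.mk' (fun e => φS (r e) + τ (π e)) ?_, ?_⟩
    · intro e e'
      have h3 : τ (π e + π e') = τ (π e) + τ (π e')
          - φS (∑ i0, c (π e) (π e') i0 • U i0) := by
        rw [hτadd (π e) (π e')]; abel
      rw [map_add π, h3, hradd, map_add, map_add]
      abel
    · refine AddMonoidHom.ext fun u0 => ?_
      show φS (r (i u0)) + τ (π (i u0)) = φS u0
      have hπi : π (i u0) = 0 := by
        have : i u0 ∈ π.ker := by rw [← hexact]; exact ⟨u0, rfl⟩
        exact this
      rw [hπi, hτ0, hru, add_zero]
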